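/- Let A ∈ ℝ^{n×n}, C ∈ ℝ^{p×n}, and let W ⊆ ℝⁿ be a subspace, with W^⊥ its orthogonal complement with respect to the standard inner product on ℝⁿ. Then there exists L ∈ ℝ^{n×p} such that (A + LC)W ⊆ W if and only if there exists F ∈ ℝ^{p×n} such that (Aᵀ + CᵀF)W^⊥ ⊆ W^⊥. In other words, W is (C,A)-invariant if and only if W^⊥ is (Aᵀ,Cᵀ)-invariant. -/

import Mathlib

open Matrix

lemma dual_inv (n : ℕ) (M : Matrix (Fin n) (Fin n) ℝ)
    (W : Submodule ℝ (EuclideanSpace ℝ (Fin n)))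
    (h : ∀ x ∈ W, (WithLp.toLp 2 (M.mulVec x) : EuclideanSpace ℝ (Fin n)) ∈ W) :
    ∀ y ∈ Wᗮ, (WithLp.toLp 2 (Mᵀ.mulVec y) : EuclideanSpace ℝ (Fin n)) ∈ Wᗮ := by
  intro y hy
  refine (Submodule.mem_orthogonal W _).mpr ?_
  intro x hx
  set u : EuclideanSpace ℝ (Fin n) := WithLp.toLp 2 (M.mulVec x) with hu
  set v : EuclideanSpace ℝ (Fin n) := WithLp.toLp 2 (Mᵀ.mulVec y) with hv
  have key : (inner ℝ x v : ℝ) = inner ℝ u y := by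
    simp only [hu, hv, EuclideanSpace.inner_eq_star_dotProduct, star_trivial]
    rw [Matrix.mulVec_transpose, Matrix.dotProduct_mulVec, dotProduct_comm]
  exact key.trans ((Submodule.mem_orthogonal W y).mp hy u (h x hx))

/-- **duality of invariant subspaces.** A subspace `W ⊆ ℝⁿ` is
`(C,A)`-invariant if and only if its orthogonal complement `W^⊥` (w.r.t. the standard
inner product) is `(Aᵀ,Cᵀ)`-invariant: there exists `L` with `(A + LC)W ⊆ W` iff there
exists `F` with `(Aᵀ + CᵀF)W^⊥ ⊆ W^⊥`. -/
theorem CA_invariant_iff_dual_invariant (n p : ℕ)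
    (A : Matrix (Fin n) (Fin n) ℝ) (C : Matrix (Fin p) (Fin n) ℝ)
    (W : Submodule ℝ (EuclideanSpace ℝ (Fin n))) :
    (∃ L : Matrix (Fin n) (Fin p) ℝ,
        ∀ x ∈ W, (WithLp.toLp 2 ((A + L * C).mulVec x) : EuclideanSpace ℝ (Fin n)) ∈ W) ↔
      (∃ F : Matrix (Fin p) (Fin n) ℝ,
        ∀ x ∈ Wᗮ, (WithLp.toLp 2 ((Aᵀ + Cᵀ * F).mulVec x) : EuclideanSpace ℝ (Fin n)) ∈ Wᗮ) := by
  constructor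
  · rintro ⟨L, hL⟩
    refine ⟨Lᵀ, ?_⟩
    have := dual_inv n (A + L * C) W hL
    simpa [Matrix.transpose_add, Matrix.transpose_mul] using this
  · rintro ⟨F, hF⟩
    refine ⟨Fᵀ, ?_⟩
    have := dual_inv n (Aᵀ + Cᵀ * F) Wᗮ hF
    simpa [Matrix.transpose_add, Matrix.transpose_mul,
      Submodule.orthogonal_orthogonal] using this
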